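/- Vizing-type depth bound for CZ-gate scheduling: if G is a simple graph with maximum degree Δ, then the edges of G can be partitioned into at most Δ + 1 matchings; consequently, a circuit consisting of one CZ gate per edge of G can be arranged into at most Δ + 1 layers of disjoint gates. -/

import Mathlib

open SimpleGraph Finset

set_option linter.unusedSectionVars false
set_option maxHeartbeats 1000000

namespace VizingProof

variable {V : Type*} [Fintype V] [DecidableEq V] {α : Type*} [DecidableEq α]

/-- a proper partial edge colouring on a set of edges -/
def Proper (C : Sym2 V → α) (D : Finset (Sym2 V)) : Prop :=
  ∀ e₁ ∈ D, ∀ e₂ ∈ D, e₁ ≠ e₂ → (∃ v, v ∈ e₁ ∧ v ∈ e₂) → C e₁ ≠ C e₂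

/-- colour `a` is present at vertex `v` -/
def Pres (C : Sym2 V → α) (D : Finset (Sym2 V)) (v : V) (a : α) : Prop :=
  ∃ e ∈ D, v ∈ e ∧ C e = a

lemma exists_endpoint {G : SimpleGraph V} [DecidableRel G.Adj] {D : Finset (Sym2 V)}
    (hD : D ⊆ G.edgeFinset) {e : Sym2 V} (he : e ∈ D) {x : V} (hx : x ∈ e) :
    ∃ z, z ≠ x ∧ e = s(x, z) := by
  induction e with
  | _ u v =>
    have hadj : G.Adj u v := (G.mem_edgeFinset).1 (hD he)
    rcases Sym2.mem_iff.1 hx with rfl | rfl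
    · exact ⟨v, hadj.ne', rfl⟩
    · exact ⟨u, hadj.ne, Sym2.eq_swap⟩

lemma exists_free (G : SimpleGraph V) [DecidableRel G.Adj] {D : Finset (Sym2 V)}
    (hD : D ⊆ G.edgeFinset) (C : Sym2 V → Fin (G.maxDegree + 1)) (v : V) :
    ∃ a, ¬ Pres C D v a := by
  by_contra h
  push_neg at h
  choose f hf1 hf2 hf3 using h
  have hinj : Function.Injective fun a : Fin (G.maxDegree + 1) =>
      (⟨f a, mem_filter.2 ⟨hf1 a, hf2 a⟩⟩ : {e // e ∈ D.filter (fun e => v ∈ e)}) := by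
    intro a b hab
    simp only [Subtype.mk.injEq] at hab
    rw [← hf3 a, ← hf3 b, hab]
  have hcard := Fintype.card_le_of_injective _ hinj
  simp only [Fintype.card_coe, Fintype.card_fin] at hcard
  have hsub : D.filter (fun e => v ∈ e) ⊆ G.incidenceFinset v := by
    intro e he
    rw [mem_filter] at he
    rw [mem_incidenceFinset]
    exact ⟨(G.mem_edgeFinset).1 (hD he.1), he.2⟩
  have := (card_le_card hsub).trans_eq (G.card_incidenceFinset_eq_degree v)
  have := G.degree_le_maxDegree v
  omega

/-- shift the hole from `s(x,y)` to `s(x,z)` -/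
lemma shift {C : Sym2 V → α} {E : Finset (Sym2 V)} {x y z : V}
    (hP : Proper C (E.erase s(x, y))) (hzE : s(x, z) ∈ E)
    (hne : s(x, y) ≠ s(x, z))
    (hfree : ¬ Pres C (E.erase s(x, y)) y (C s(x, z))) :
    Proper (Function.update C s(x, y) (C s(x, z))) (E.erase s(x, z)) := by
  set d := C s(x, z) with hd
  have key : ∀ e ∈ E.erase s(x, z), e ≠ s(x, y) → (∃ v, v ∈ s(x, y) ∧ v ∈ e) →
      C e ≠ d := by
    rintro e he hexy ⟨v, hv1, hv2⟩
    have heD : e ∈ E.erase s(x, y) := mem_erase.2 ⟨hexy, mem_erase.1 he |>.2⟩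
    obtain hvx | hvy := Sym2.mem_iff.1 hv1
    · -- v = x : compare with s(x,z)
      have hxz : s(x, z) ∈ E.erase s(x, y) := mem_erase.2 ⟨hne.symm, hzE⟩
      exact hP e heD _ hxz (mem_erase.1 he).1 ⟨x, hvx ▸ hv2, Sym2.mem_mk_left _ _⟩
    · -- v = y
      intro hc
      exact hfree ⟨e, heD, hvy ▸ hv2, hc⟩
  intro e₁ he₁ e₂ he₂ hne12 hshare
  by_cases h1 : e₁ = s(x, y) <;> by_cases h2 : e₂ = s(x, y)
  · exact absurd (h1.trans h2.symm) hne12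
  · subst h1
    rw [Function.update_self, Function.update_of_ne h2]
    obtain ⟨v, hv1, hv2⟩ := hshare
    exact fun hc => key e₂ he₂ h2 ⟨v, hv1, hv2⟩ hc.symm
  · subst h2
    rw [Function.update_self, Function.update_of_ne h1]
    obtain ⟨v, hv1, hv2⟩ := hshare
    exact fun hc => key e₁ he₁ h1 ⟨v, hv2, hv1⟩ hc
  · rw [Function.update_of_ne h1, Function.update_of_ne h2]
    exact hP e₁ (mem_erase.2 ⟨h1, (mem_erase.1 he₁).2⟩) e₂
      (mem_erase.2 ⟨h2, (mem_erase.1 he₂).2⟩) hne12 hshare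


/-- fill the hole with a colour free at both endpoints -/
lemma fill {C : Sym2 V → α} {E : Finset (Sym2 V)} {x y : V} {a : α}
    (hP : Proper C (E.erase s(x, y))) (hxyE : s(x, y) ∈ E)
    (hax : ¬ Pres C (E.erase s(x, y)) x a) (hay : ¬ Pres C (E.erase s(x, y)) y a) :
    Proper (Function.update C s(x, y) a) E := by
  have key : ∀ e ∈ E, e ≠ s(x, y) → (∃ v, v ∈ s(x, y) ∧ v ∈ e) → C e ≠ a := by
    rintro e he hexy ⟨v, hv1, hv2⟩ hc
    have heD : e ∈ E.erase s(x, y) := mem_erase.2 ⟨hexy, he⟩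
    obtain hvx | hvy := Sym2.mem_iff.1 hv1
    · exact hax ⟨e, heD, hvx ▸ hv2, hc⟩
    · exact hay ⟨e, heD, hvy ▸ hv2, hc⟩
  intro e₁ he₁ e₂ he₂ hne12 hshare
  by_cases h1 : e₁ = s(x, y) <;> by_cases h2 : e₂ = s(x, y)
  · exact absurd (h1.trans h2.symm) hne12
  · subst h1
    rw [Function.update_self, Function.update_of_ne h2]
    obtain ⟨v, hv1, hv2⟩ := hshare
    exact fun hc => key e₂ he₂ h2 ⟨v, hv1, hv2⟩ hc.symm
  · subst h2
    rw [Function.update_self, Function.update_of_ne h1]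
    obtain ⟨v, hv1, hv2⟩ := hshare
    exact fun hc => key e₁ he₁ h1 ⟨v, hv2, hv1⟩ hc
  · rw [Function.update_of_ne h1, Function.update_of_ne h2]
    exact hP e₁ (mem_erase.2 ⟨h1, he₁⟩) e₂ (mem_erase.2 ⟨h2, he₂⟩) hne12 hshare

lemma sxy_ne {x y z : V} (hyz : y ≠ z) : s(x, y) ≠ s(x, z) := by
  rw [Ne, Sym2.congr_right]; exact hyz

/-- rotate along a fan and fill -/
lemma finish {E : Finset (Sym2 V)} {x : V} {a : α} :
    ∀ (L : List V) (C : Sym2 V → α) (y : V),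
    Proper C (E.erase s(x, y)) → s(x, y) ∈ E →
    (x ∉ y :: L) → (y :: L).Nodup →
    (∀ z ∈ L, s(x, z) ∈ E) →
    (∀ i (h : i + 1 < (y :: L).length),
      ¬ Pres C (E.erase s(x, y)) ((y :: L)[i]) (C s(x, (y :: L)[i + 1]))) →
    ¬ Pres C (E.erase s(x, y)) x a →
    ¬ Pres C (E.erase s(x, y)) ((y :: L).getLast (by simp)) a →
    ∃ C' : Sym2 V → α, Proper C' E := by
  intro L
  induction L with
  | nil =>
    intro C y hP hxyE _ _ _ _ hax hay
    simp only [List.getLast_singleton] at hay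
    exact ⟨_, fill hP hxyE hax hay⟩
  | cons z L' ih =>
    intro C y hP hxyE hxmem hnd hedges hchain hax hlast
    have hyz : y ≠ z := by
      intro h; exact (List.nodup_cons.1 hnd).1 (h ▸ List.mem_cons_self)
    have hxy : x ≠ y := fun h => hxmem (h ▸ List.mem_cons_self)
    have hxz : x ≠ z := fun h => hxmem (by simp [← h])
    have hzE : s(x, z) ∈ E := hedges z (List.mem_cons_self)
    have hne : s(x, y) ≠ s(x, z) := sxy_ne hyz
    set d := C s(x, z) with hd
    have hdfree : ¬ Pres C (E.erase s(x, y)) y d := by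
      have := hchain 0 (by simp)
      simpa using this
    set C₁ := Function.update C s(x, y) d with hC₁
    have hP₁ : Proper C₁ (E.erase s(x, z)) := shift hP hzE hne hdfree
    -- presence transfer
    have pres_shift : ∀ w, w ≠ x → w ≠ y → ∀ b,
        Pres C₁ (E.erase s(x, z)) w b → Pres C (E.erase s(x, y)) w b := by
      rintro w hwx hwy b ⟨e, he, hw, hc⟩
      by_cases hexy : e = s(x, y)
      · subst hexy
        rcases Sym2.mem_iff.1 hw with h | h
        exacts [absurd h hwx, absurd h hwy]
      · rw [hC₁, Function.update_of_ne hexy] at hc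
        exact ⟨e, mem_erase.2 ⟨hexy, (mem_erase.1 he).2⟩, hw, hc⟩
    have hndz : (z :: L').Nodup := (List.nodup_cons.1 hnd).2
    have hxmem' : x ∉ z :: L' := fun h => hxmem (List.mem_cons_of_mem _ h)
    refine ih C₁ z hP₁ hzE hxmem' hndz (fun w hw => hedges w (List.mem_cons_of_mem _ hw)) ?_ ?_ ?_
    · -- chain
      intro i hi
      have hCe : C₁ s(x, (z :: L')[i + 1]) = C s(x, (z :: L')[i + 1]) := by
        apply Function.update_of_ne
        apply sxy_ne
        intro h
        have : (z :: L')[i + 1] ∈ z :: L' := List.getElem_mem _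
        rw [h] at this
        exact (List.nodup_cons.1 hnd).1 this
      rw [hCe]
      intro hPres
      have hwx : (z :: L')[i] ≠ x := by
        intro h; exact hxmem' (h ▸ List.getElem_mem _)
      have hwy : (z :: L')[i] ≠ y := by
        intro h
        exact (List.nodup_cons.1 hnd).1 (h ▸ List.getElem_mem _)
      have := pres_shift _ hwx hwy _ hPres
      have hch := hchain (i + 1) (by simpa using hi)
      simp only [List.getElem_cons_succ] at hch
      exact hch this
    · -- a free at x
      rintro ⟨e, he, hw, hc⟩
      by_cases hexy : e = s(x, y)
      · subst hexy
        rw [hC₁, Function.update_self] at hc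
        exact hax ⟨s(x, z), mem_erase.2 ⟨hne.symm, hzE⟩, Sym2.mem_mk_left _ _, hc⟩
      · rw [hC₁, Function.update_of_ne hexy] at hc
        exact hax ⟨e, mem_erase.2 ⟨hexy, (mem_erase.1 he).2⟩, hw, hc⟩
    · -- a free at last
      intro hPres
      have hmem : (z :: L').getLast (by simp) ∈ z :: L' := List.getLast_mem _
      have hwx : (z :: L').getLast (by simp) ≠ x := fun h => hxmem' (h ▸ hmem)
      have hwy : (z :: L').getLast (by simp) ≠ y := by
        intro h
        rw [h] at hmem
        exact (List.nodup_cons.1 hnd).1 hmem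
      apply hlast
      have hlast_eq : (y :: z :: L').getLast (by simp) = (z :: L').getLast (by simp) :=
        List.getLast_cons (by simp)
      rw [hlast_eq]
      exact pres_shift _ hwx hwy _ hPres


/-- the graph of edges coloured `c` or `d` -/
def cdG (C : Sym2 V → α) (D : Finset (Sym2 V)) (c d : α) : SimpleGraph V :=
  SimpleGraph.fromRel (fun u v => s(u, v) ∈ D ∧ (C s(u, v) = c ∨ C s(u, v) = d))

lemma cdG_adj {C : Sym2 V → α} {D : Finset (Sym2 V)} {c d : α} {u v : V} :
    (cdG C D c d).Adj u v ↔ u ≠ v ∧ s(u, v) ∈ D ∧ (C s(u, v) = c ∨ C s(u, v) = d) := by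
  rw [cdG, fromRel_adj]
  constructor
  · rintro ⟨h, h2 | h2⟩
    · exact ⟨h, h2⟩
    · rw [Sym2.eq_swap] at h2; exact ⟨h, h2⟩
  · rintro ⟨h, h2⟩; exact ⟨h, Or.inl h2⟩

/-- the swapping condition -/
def SwQ (C : Sym2 V → α) (D : Finset (Sym2 V)) (c d : α) (w₀ : V) (e : Sym2 V) : Prop :=
  e ∈ D ∧ (C e = c ∨ C e = d) ∧ ∃ v ∈ e, (cdG C D c d).Reachable w₀ v

/-- swap colours c and d on the component of w₀ -/
noncomputable def swapC (C : Sym2 V → α) (D : Finset (Sym2 V)) (c d : α) (w₀ : V) :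
    Sym2 V → α := fun e =>
  letI := Classical.dec (SwQ C D c d w₀ e)
  if SwQ C D c d w₀ e then (if C e = c then d else c) else C e

section swap

variable {G : SimpleGraph V} [DecidableRel G.Adj]
  {C : Sym2 V → α} {D : Finset (Sym2 V)} {c d : α} {w₀ : V}

lemma swapC_pos_c {e : Sym2 V} (hQ : SwQ C D c d w₀ e) (hce : C e = c) :
    swapC C D c d w₀ e = d := by
  rw [swapC]; simp only [if_pos hQ, if_pos hce]

lemma swapC_pos_d {e : Sym2 V} (hcd : c ≠ d) (hQ : SwQ C D c d w₀ e) (hce : C e = d) :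
    swapC C D c d w₀ e = c := by
  rw [swapC]
  have h1 : ¬ C e = c := fun h => hcd (h.symm.trans hce)
  simp only [if_pos hQ, if_neg h1]

lemma swapC_neg {e : Sym2 V} (hQ : ¬ SwQ C D c d w₀ e) :
    swapC C D c d w₀ e = C e := by
  rw [swapC]; simp only [if_neg hQ]

/-- a cd-edge touching the component is inside it -/
lemma touch (hDG : D ⊆ G.edgeFinset) {e : Sym2 V} (he : e ∈ D)
    (hcd : C e = c ∨ C e = d) (hv : ∃ v ∈ e, (cdG C D c d).Reachable w₀ v) :
    ∀ u ∈ e, (cdG C D c d).Reachable w₀ u := by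
  induction e with
  | _ p q =>
    have hne : p ≠ q := by
      intro h
      have := (G.mem_edgeFinset).1 (hDG he)
      rw [h] at this
      exact this.ne rfl
    have hadj : (cdG C D c d).Adj p q := cdG_adj.2 ⟨hne, he, hcd⟩
    obtain ⟨v, hv1, hv2⟩ := hv
    intro u hu
    rcases Sym2.mem_iff.1 hv1 with rfl | rfl <;> rcases Sym2.mem_iff.1 hu with rfl | rfl
    · exact hv2
    · exact hv2.trans ⟨hadj.toWalk⟩
    · exact hv2.trans ⟨hadj.symm.toWalk⟩
    · exact hv2

/-- presence of colours other than c,d is unchanged -/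
lemma pres_swap_of_ne (hcd : c ≠ d) {v : V} {a : α} (hac : a ≠ c) (had : a ≠ d) :
    Pres (swapC C D c d w₀) D v a ↔ Pres C D v a := by
  unfold Pres
  refine exists_congr fun e => and_congr_right fun he => and_congr_right fun hv => ?_
  by_cases hQ : SwQ C D c d w₀ e
  · rcases hQ.2.1 with h | h
    · rw [swapC_pos_c hQ h, h]
      exact ⟨fun hh => absurd hh.symm had, fun hh => absurd hh.symm hac⟩
    · rw [swapC_pos_d hcd hQ h, h]
      exact ⟨fun hh => absurd hh.symm hac, fun hh => absurd hh.symm had⟩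
  · rw [swapC_neg hQ]

/-- presence at a vertex outside the component is unchanged -/
lemma pres_swap_of_far (hDG : D ⊆ G.edgeFinset) {v : V}
    (hfar : ¬ (cdG C D c d).Reachable w₀ v) (a : α) :
    Pres (swapC C D c d w₀) D v a ↔ Pres C D v a := by
  have key : ∀ e ∈ D, v ∈ e → swapC C D c d w₀ e = C e := by
    intro e he hv
    apply swapC_neg
    rintro ⟨-, hcd', hex⟩
    exact hfar (touch hDG he hcd' hex v hv)
  unfold Pres
  refine exists_congr fun e => ?_
  constructor
  · rintro ⟨he, hv, hc⟩; exact ⟨he, hv, (key e he hv) ▸ hc⟩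
  · rintro ⟨he, hv, hc⟩; exact ⟨he, hv, (key e he hv).trans hc⟩

/-- presence of c at a vertex inside the component becomes presence of d -/
lemma pres_swap_of_near_c (hcd : c ≠ d) {v : V}
    (hnear : (cdG C D c d).Reachable w₀ v) :
    Pres (swapC C D c d w₀) D v c ↔ Pres C D v d := by
  constructor
  · rintro ⟨e, he, hv, hc⟩
    refine ⟨e, he, hv, ?_⟩
    by_cases hQ : SwQ C D c d w₀ e
    · rcases hQ.2.1 with h | h
      · rw [swapC_pos_c hQ h] at hc
        exact absurd hc hcd.symm
      · exact h
    · rw [swapC_neg hQ] at hc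
      exact absurd ⟨he, Or.inl hc, v, hv, hnear⟩ hQ
  · rintro ⟨e, he, hv, hc⟩
    exact ⟨e, he, hv, swapC_pos_d hcd ⟨he, Or.inr hc, v, hv, hnear⟩ hc⟩

lemma pres_swap_of_near_d (hcd : c ≠ d) {v : V}
    (hnear : (cdG C D c d).Reachable w₀ v) :
    Pres (swapC C D c d w₀) D v d ↔ Pres C D v c := by
  constructor
  · rintro ⟨e, he, hv, hc⟩
    refine ⟨e, he, hv, ?_⟩
    by_cases hQ : SwQ C D c d w₀ e
    · rcases hQ.2.1 with h | h
      · exact h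
      · rw [swapC_pos_d hcd hQ h] at hc
        exact absurd hc hcd
    · rw [swapC_neg hQ] at hc
      exact absurd ⟨he, Or.inr hc, v, hv, hnear⟩ hQ
  · rintro ⟨e, he, hv, hc⟩
    exact ⟨e, he, hv, swapC_pos_c ⟨he, Or.inl hc, v, hv, hnear⟩ hc⟩

/-- swapping preserves properness -/
lemma proper_swap (hDG : D ⊆ G.edgeFinset) (hP : Proper C D) (hcd : c ≠ d) :
    Proper (swapC C D c d w₀) D := by
  intro e₁ he₁ e₂ he₂ hne hshare
  have hPne := hP e₁ he₁ e₂ he₂ hne hshare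
  obtain ⟨v, hv1, hv2⟩ := hshare
  have force : ∀ (f₁ f₂ : Sym2 V), f₂ ∈ D → v ∈ f₁ → v ∈ f₂ →
      SwQ C D c d w₀ f₁ → (C f₂ = c ∨ C f₂ = d) → SwQ C D c d w₀ f₂ := by
    intro f₁ f₂ hf₂ hvf₁ hvf₂ hQ hcd₂
    exact ⟨hf₂, hcd₂, v, hvf₂, touch hDG hQ.1 hQ.2.1 hQ.2.2 v hvf₁⟩
  by_cases hQ1 : SwQ C D c d w₀ e₁ <;> by_cases hQ2 : SwQ C D c d w₀ e₂
  · rcases hQ1.2.1 with h1 | h1 <;> rcases hQ2.2.1 with h2 | h2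
    · exact absurd (h1.trans h2.symm) hPne
    · rw [swapC_pos_c hQ1 h1, swapC_pos_d hcd hQ2 h2]; exact hcd.symm
    · rw [swapC_pos_d hcd hQ1 h1, swapC_pos_c hQ2 h2]; exact hcd
    · exact absurd (h1.trans h2.symm) hPne
  · rw [swapC_neg hQ2]
    have h2ne : C e₂ ≠ c ∧ C e₂ ≠ d := by
      constructor <;> intro h <;>
        exact hQ2 (force e₁ e₂ he₂ hv1 hv2 hQ1 (by simp [h]))
    rcases hQ1.2.1 with h1 | h1
    · rw [swapC_pos_c hQ1 h1]; exact fun h => h2ne.2 h.symm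
    · rw [swapC_pos_d hcd hQ1 h1]; exact fun h => h2ne.1 h.symm
  · rw [swapC_neg hQ1]
    have h1ne : C e₁ ≠ c ∧ C e₁ ≠ d := by
      constructor <;> intro h <;>
        exact hQ1 (force e₂ e₁ he₁ hv2 hv1 hQ2 (by simp [h]))
    rcases hQ2.2.1 with h2 | h2
    · rw [swapC_pos_c hQ2 h2]; exact h1ne.2
    · rw [swapC_pos_d hcd hQ2 h2]; exact h1ne.1
  · rw [swapC_neg hQ1, swapC_neg hQ2]; exact hPne

end swap



lemma swapC_eq_of_ne {C : Sym2 V → α} {D : Finset (Sym2 V)} {c d : α} {w₀ : V}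
    {e : Sym2 V} (h1 : C e ≠ c) (h2 : C e ≠ d) :
    swapC C D c d w₀ e = C e := by
  apply swapC_neg
  rintro ⟨-, h | h, -⟩
  exacts [h1 h, h2 h]

/-- In a graph of max degree ≤ 2, a vertex of degree ≤ 1 cannot reach two
other distinct vertices of degree ≤ 1. -/
lemma no_three :
    ∀ (n : ℕ) (H : SimpleGraph V)
    (_ : ∀ a p q, H.Adj a p → H.Adj a q → p ≠ q → ∀ r, H.Adj a r → r = p ∨ r = q)
    (x v w : V)
    (_ : ∀ p q, H.Adj x p → H.Adj x q → p = q)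
    (_ : ∀ p q, H.Adj v p → H.Adj v q → p = q)
    (_ : ∀ p q, H.Adj w p → H.Adj w q → p = q)
    (_ : x ≠ v) (_ : x ≠ w) (_ : v ≠ w)
    (p : H.Walk x v) (_ : p.IsPath) (q : H.Walk x w) (_ : q.IsPath),
    p.length + q.length ≤ n → False := by
  intro n
  induction n with
  | zero =>
    intro H h2 x v w h1x h1v h1w hxv hxw hvw p hp q hq hlen
    have : p.length = 0 := by omega
    exact hxv (p.eq_of_length_eq_zero this)
  | succ n ih =>
    intro H h2 x v w h1x h1v h1w hxv hxw hvw p hp q hq hlen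
    cases p with
    | nil => exact hxv rfl
    | cons hadj p₁ =>
      rename_i t
      cases q with
      | nil => exact hxw rfl
      | cons hadj' q₁ =>
        rename_i t'
        have htt : t' = t := h1x _ _ hadj' hadj
        subst htt
        rw [Walk.cons_isPath_iff] at hp hq
        by_cases htv : t' = v
        · -- then q passes x twice
          subst htv
          cases q₁ with
          | nil => exact hvw rfl
          | cons hadj2 q₂ =>
            rename_i s'
            have hsx : s' = x := h1v _ _ hadj2 hadj.symm
            subst hsx
            exact hq.2 (List.mem_cons_of_mem _ (Walk.start_mem_support _))
        · by_cases htw : t' = w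
          · subst htw
            cases p₁ with
            | nil => exact hvw rfl
            | cons hadj2 p₂ =>
              rename_i s'
              have hsx : s' = x := h1w _ _ hadj2 hadj.symm
              subst hsx
              exact hp.2 (List.mem_cons_of_mem _ (Walk.start_mem_support _))
          · -- surgery: delete the edge x-t' and recurse from t'
            set H' := H.deleteEdges {s(x, t')} with hH'
            have hsub : ∀ {a b}, H'.Adj a b → H.Adj a b := fun h => (deleteEdges_adj.1 h).1
            have hxne : ∀ {a b}, H'.Adj a b → s(a, b) ≠ s(x, t') := by
              intro a b h hh
              exact (deleteEdges_adj.1 h).2 (by rw [hh]; exact rfl)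
            have hp₁e : ∀ e ∈ p₁.edges, e ∈ H'.edgeSet := by
              intro e he
              rw [edgeSet_deleteEdges]
              refine ⟨p₁.edges_subset_edgeSet he, ?_⟩
              intro hmem
              rw [Set.mem_singleton_iff] at hmem
              subst hmem
              exact hp.2 (p₁.fst_mem_support_of_mem_edges he)
            have hq₁e : ∀ e ∈ q₁.edges, e ∈ H'.edgeSet := by
              intro e he
              rw [edgeSet_deleteEdges]
              refine ⟨q₁.edges_subset_edgeSet he, ?_⟩
              intro hmem
              rw [Set.mem_singleton_iff] at hmem
              subst hmem
              exact hq.2 (q₁.fst_mem_support_of_mem_edges he)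
            refine ih H' ?_ t' v w ?_ ?_ ?_ htv htw
              hvw (p₁.transfer H' hp₁e) (hp.1.transfer _) (q₁.transfer H' hq₁e)
              (hq.1.transfer _) ?_
            · intro a pp qq ha1 ha2 hpq r har
              exact h2 a pp qq (hsub ha1) (hsub ha2) hpq r (hsub har)
            · -- t' has degree ≤ 1 in H'
              intro pp qq ha1 ha2
              have hppx : pp ≠ x := by
                intro h; subst h
                exact hxne ha1 (Sym2.eq_swap)
              have hqqx : qq ≠ x := by
                intro h; subst h
                exact hxne ha2 (Sym2.eq_swap)
              by_contra hne
              rcases h2 t' pp qq (hsub ha1) (hsub ha2) hne x hadj'.symm with h | h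
              · exact hppx h.symm
              · exact hqqx h.symm
            · intro pp qq ha1 ha2; exact h1v _ _ (hsub ha1) (hsub ha2)
            · intro pp qq ha1 ha2; exact h1w _ _ (hsub ha1) (hsub ha2)
            · rw [Walk.length_transfer, Walk.length_transfer]
              simp only [Walk.length_cons] at hlen
              omega


section cddeg
variable {C : Sym2 V → α} {D : Finset (Sym2 V)} {c d : α}

/-- at a vertex missing c or d, the cd-graph has at most one neighbour -/
lemma cd_atMostOne (hP : Proper C D) {v : V}
    (hfree : ¬ Pres C D v c ∨ ¬ Pres C D v d) :
    ∀ p q, (cdG C D c d).Adj v p → (cdG C D c d).Adj v q → p = q := by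
  intro p q hp hq
  rw [cdG_adj] at hp hq
  by_contra hne
  have hed : s(v, p) ≠ s(v, q) := sxy_ne hne
  have hcol := hP _ hp.2.1 _ hq.2.1 hed ⟨v, Sym2.mem_mk_left _ _, Sym2.mem_mk_left _ _⟩
  have hpres : ∀ b, C s(v, p) = b ∨ C s(v, q) = b → Pres C D v b := by
    rintro b (h | h)
    · exact ⟨_, hp.2.1, Sym2.mem_mk_left _ _, h⟩
    · exact ⟨_, hq.2.1, Sym2.mem_mk_left _ _, h⟩
  rcases hp.2.2 with h1 | h1 <;> rcases hq.2.2 with h2 | h2 <;>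
    rcases hfree with hf | hf <;>
    first
      | exact hcol (h1.trans h2.symm)
      | exact hf (hpres _ (Or.inl h1))
      | exact hf (hpres _ (Or.inr h2))

/-- the cd-graph has max degree 2 (in collapse form) -/
lemma cd_three (hP : Proper C D) :
    ∀ a p q, (cdG C D c d).Adj a p → (cdG C D c d).Adj a q → p ≠ q →
      ∀ r, (cdG C D c d).Adj a r → r = p ∨ r = q := by
  intro a p q hp hq hpq r hr
  rw [cdG_adj] at hp hq hr
  by_contra hne
  push_neg at hne
  have hmk : ∀ b : V, a ∈ s(a, b) := fun b => Sym2.mem_mk_left _ _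
  have h1 : C s(a, p) ≠ C s(a, q) := hP _ hp.2.1 _ hq.2.1 (sxy_ne hpq) ⟨a, hmk p, hmk q⟩
  have h2 : C s(a, r) ≠ C s(a, p) := hP _ hr.2.1 _ hp.2.1 (sxy_ne hne.1) ⟨a, hmk r, hmk p⟩
  have h3 : C s(a, r) ≠ C s(a, q) := hP _ hr.2.1 _ hq.2.1 (sxy_ne hne.2) ⟨a, hmk r, hmk q⟩
  rcases hp.2.2 with ha | ha <;> rcases hq.2.2 with hb | hb <;> rcases hr.2.2 with hcc | hcc <;>
    first
      | exact h1 (ha.trans hb.symm)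
      | exact h2 (hcc.trans ha.symm)
      | exact h3 (hcc.trans hb.symm)

end cddeg

/-- the key extension lemma: a proper colouring of E minus one edge extends to E -/
lemma extend {G : SimpleGraph V} [DecidableRel G.Adj] {E : Finset (Sym2 V)}
    (hE : E ⊆ G.edgeFinset) {x y₀ : V} (hxy : s(x, y₀) ∈ E)
    (C : Sym2 V → Fin (G.maxDegree + 1))
    (hP : Proper C (E.erase s(x, y₀))) :
    ∃ C' : Sym2 V → Fin (G.maxDegree + 1), Proper C' E := by
  classical
  set D := E.erase s(x, y₀) with hD
  have hDG : D ⊆ G.edgeFinset := (erase_subset _ _).trans hE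
  obtain ⟨c, hcx⟩ := exists_free G hDG C x
  have hxyne : x ≠ y₀ := (SimpleGraph.mem_edgeFinset.1 (hE hxy)).ne
  suffices h : ∀ (n : ℕ) (M : List V), (y₀ :: M).Nodup → x ∉ y₀ :: M →
      (∀ z ∈ M, s(x, z) ∈ E) →
      (∀ i (h : i + 1 < (y₀ :: M).length),
        ¬ Pres C D ((y₀ :: M)[i]) (C s(x, (y₀ :: M)[i + 1]))) →
      Fintype.card V - M.length ≤ n →
      ∃ C' : Sym2 V → Fin (G.maxDegree + 1), Proper C' E by
    refine h (Fintype.card V) [] (by simp) (by simpa using hxyne) (by simp) ?_ (by omega)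
    intro i hi
    simp at hi
  intro n
  induction n with
  | zero =>
    intro M hnd hxm hedg hch hlen
    have := hnd.length_le_card
    simp only [List.length_cons] at this
    omega
  | succ n ih =>
    intro M hnd hxm hedg hch hlen
    have hLne : (y₀ :: M) ≠ [] := by simp
    set w := (y₀ :: M).getLast hLne with hw
    have hwmem : w ∈ y₀ :: M := List.getLast_mem _
    have hwx : w ≠ x := fun h => hxm (h ▸ hwmem)
    obtain ⟨d, hdw⟩ := exists_free G hDG C w
    by_cases hdx : Pres C D x d
    swap
    · -- d is free at x too : rotate and fill
      exact finish M C y₀ hP hxy hxm hnd hedg hch hdx hdw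
    · obtain ⟨e₀, he₀D, hxe₀, hce₀⟩ := hdx
      obtain ⟨z, hzx, rfl⟩ := exists_endpoint hDG he₀D hxe₀
      have hzy₀ : z ≠ y₀ := by
        intro h
        exact (mem_erase.1 he₀D).1 (by rw [h])
      have hzE : s(x, z) ∈ E := (mem_erase.1 he₀D).2
      have hcd : c ≠ d := by
        rintro rfl
        exact hcx ⟨s(x, z), he₀D, Sym2.mem_mk_left _ _, hce₀⟩
      -- fan edges are in D
      have hfanedge : ∀ i (hi : i + 1 < (y₀ :: M).length), s(x, (y₀ :: M)[i + 1]'hi) ∈ D := by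
        intro i hi
        have hiM : i < M.length := by
          simp only [List.length_cons] at hi
          omega
        have hmemM : (y₀ :: M)[i + 1]'hi ∈ M := by
          simp only [List.getElem_cons_succ]
          exact List.getElem_mem _
        refine mem_erase.2 ⟨sxy_ne ?_, hedg _ hmemM⟩
        intro hne0
        exact (List.nodup_cons.1 hnd).1 (hne0 ▸ hmemM)
      by_cases hzL : z ∈ y₀ :: M
      · -- Kempe chain case
        obtain ⟨j, hj, hjz⟩ := List.mem_iff_getElem.1 hzL
        have hj0 : j ≠ 0 := by
          intro h
          subst h
          simp only [List.getElem_cons_zero] at hjz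
          exact hzy₀ hjz.symm
        obtain ⟨j', rfl⟩ : ∃ j', j = j' + 1 := ⟨j - 1, by omega⟩
        have humem : (y₀ :: M)[j'] ∈ y₀ :: M := List.getElem_mem _
        have hux : (y₀ :: M)[j'] ≠ x := fun h => hxm (h ▸ humem)
        have hdu : ¬ Pres C D ((y₀ :: M)[j']) d := by
          have := hch j' (by omega)
          rwa [hjz, hce₀] at this
        have hwz : w ≠ z := by
          intro h
          exact hdw ⟨s(x, z), he₀D, by rw [h]; exact Sym2.mem_mk_right _ _, hce₀⟩
        have hjlast : j' + 1 ≠ (y₀ :: M).length - 1 := by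
          intro h
          apply hwz
          rw [hw, List.getLast_eq_getElem, ← hjz]
          congr 1
          omega
        have huw : (y₀ :: M)[j'] ≠ w := by
          rw [hw, List.getLast_eq_getElem]
          intro hh
          have := (List.Nodup.getElem_inj_iff hnd).1 hh
          omega
        have h2 := cd_three (c := c) (d := d) hP
        have h1x := cd_atMostOne (c := c) (d := d) hP (Or.inl hcx)
        have h1u := cd_atMostOne (c := c) (d := d) hP (Or.inr hdu)
        have h1w := cd_atMostOne (c := c) (d := d) hP (Or.inr hdw)
        have hno3 : ¬ ((cdG C D c d).Reachable x ((y₀ :: M)[j']) ∧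
            (cdG C D c d).Reachable x w) := by
          rintro ⟨hr1, hr2⟩
          obtain ⟨p⟩ := hr1
          obtain ⟨q⟩ := hr2
          obtain ⟨p', hp'⟩ := p.toPath
          obtain ⟨q', hq'⟩ := q.toPath
          exact no_three (p'.length + q'.length) (cdG C D c d) h2 x _ w h1x h1u h1w
            (Ne.symm hux) (Ne.symm hwx) huw p' hp' q' hq' le_rfl
        have hzadj : (cdG C D c d).Adj x z := cdG_adj.2 ⟨Ne.symm hzx, he₀D, Or.inr hce₀⟩
        by_cases hru : (cdG C D c d).Reachable x ((y₀ :: M)[j'])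
        · -- case B : swap the component of w, use the full fan with colour c
          have hrw : ¬ (cdG C D c d).Reachable x w := fun h => hno3 ⟨hru, h⟩
          have hrwx : ¬ (cdG C D c d).Reachable w x := fun h => hrw h.symm
          have hrwu : ¬ (cdG C D c d).Reachable w ((y₀ :: M)[j']) :=
            fun h => hrw (hru.trans h.symm)
          have hrwz : ¬ (cdG C D c d).Reachable w z :=
            fun h => hrwx (h.trans ⟨hzadj.symm.toWalk⟩)
          have hP₁ : Proper (swapC C D c d w) D := proper_swap hDG hP hcd
          have chain₁ : ∀ i (hi : i + 1 < (y₀ :: M).length),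
              ¬ Pres (swapC C D c d w) D ((y₀ :: M)[i])
                ((swapC C D c d w) s(x, (y₀ :: M)[i + 1])) := by
            intro i hi
            have hedge := hfanedge i hi
            have hanec : C s(x, (y₀ :: M)[i + 1]) ≠ c :=
              fun h => hcx ⟨_, hedge, Sym2.mem_mk_left _ _, h⟩
            by_cases hij : i = j'
            · subst hij
              have hvalC : (swapC C D c d w) s(x, (y₀ :: M)[i + 1]) =
                  C s(x, (y₀ :: M)[i + 1]) := by
                apply swapC_neg
                rintro ⟨-, -, v, hv, hrv⟩
                rw [hjz] at hv
                rcases Sym2.mem_iff.1 hv with rfl | rfl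
                · exact hrwx hrv
                · exact hrwz hrv
              rw [hvalC, hjz, hce₀, pres_swap_of_far hDG hrwu d]
              have := hch i (by omega)
              rwa [hjz, hce₀] at this
            · have haned : C s(x, (y₀ :: M)[i + 1]) ≠ d := by
                intro h
                have hnez : (y₀ :: M)[i + 1] ≠ z := by
                  rw [← hjz]
                  intro hh
                  have := (List.Nodup.getElem_inj_iff hnd).1 hh
                  omega
                exact hP _ hedge _ he₀D (sxy_ne hnez)
                  ⟨x, Sym2.mem_mk_left _ _, Sym2.mem_mk_left _ _⟩ (h.trans hce₀.symm)
              rw [swapC_eq_of_ne hanec haned, pres_swap_of_ne hcd hanec haned]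
              exact hch i hi
          have hax₁ : ¬ Pres (swapC C D c d w) D x c := by
            rw [pres_swap_of_far hDG hrwx]
            exact hcx
          have hlast₁ : ¬ Pres (swapC C D c d w) D w c := by
            rw [pres_swap_of_near_c hcd (Reachable.refl w)]
            exact hdw
          exact finish M (swapC C D c d w) y₀ hP₁ hxy hxm hnd hedg chain₁ hax₁ hlast₁
        · -- case A : swap the component of x, truncate the fan at u, colour d
          have hP₁ : Proper (swapC C D c d x) D := proper_swap hDG hP hcd
          have hax₁ : ¬ Pres (swapC C D c d x) D x d := by
            rw [pres_swap_of_near_d hcd (Reachable.refl x)]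
            exact hcx
          have hu₁ : ¬ Pres (swapC C D c d x) D ((y₀ :: M)[j']) d := by
            rw [pres_swap_of_far hDG hru]
            exact hdu
          have hjM : j' < M.length := by
            simp only [List.length_cons] at hj
            omega
          have hlen' : (M.take j').length = j' := by
            rw [List.length_take]
            omega
          have hGE : ∀ i (hi : i < j' + 1) (hi2 : i < (y₀ :: M.take j').length),
              (y₀ :: M.take j')[i] = (y₀ :: M)[i]'(by simp only [List.length_cons]; omega) := by
            intro i hi hi2
            match i with
            | 0 => rfl
            | (i + 1) =>
              simp only [List.getElem_cons_succ, List.getElem_take]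
          refine finish (M.take j') (swapC C D c d x) y₀ hP₁ hxy ?_ ?_ ?_ ?_ hax₁ ?_
          · intro hmem
            rcases List.mem_cons.1 hmem with h | h
            · exact hxyne h
            · exact hxm (List.mem_cons_of_mem _ (List.take_subset _ _ h))
          · have hsub : List.Sublist (y₀ :: M.take j') (y₀ :: M) :=
              List.Sublist.cons₂ y₀ (List.take_sublist _ _)
            exact hnd.sublist hsub
          · intro z' hz'
            exact hedg z' (List.take_subset _ _ hz')
          · intro i hi
            simp only [List.length_cons, hlen'] at hi
            have hiL : i + 1 < (y₀ :: M).length := by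
              simp only [List.length_cons]
              omega
            rw [hGE i (by omega) (by simp only [List.length_cons, hlen']; omega),
                hGE (i + 1) (by omega) (by simp only [List.length_cons, hlen']; omega)]
            have hedge := hfanedge i hiL
            have hanec : C s(x, (y₀ :: M)[i + 1]) ≠ c :=
              fun h => hcx ⟨_, hedge, Sym2.mem_mk_left _ _, h⟩
            have haned : C s(x, (y₀ :: M)[i + 1]) ≠ d := by
              intro h
              have hnez : (y₀ :: M)[i + 1] ≠ z := by
                rw [← hjz]
                intro hh
                have := (List.Nodup.getElem_inj_iff hnd).1 hh
                omega
              exact hP _ hedge _ he₀D (sxy_ne hnez)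
                ⟨x, Sym2.mem_mk_left _ _, Sym2.mem_mk_left _ _⟩ (h.trans hce₀.symm)
            rw [swapC_eq_of_ne hanec haned, pres_swap_of_ne hcd hanec haned]
            exact hch i hiL
          · have hlen2 : (y₀ :: M.take j').length = j' + 1 := by
              simp only [List.length_cons, hlen']
            have hlast_eq : (y₀ :: M.take j').getLast (by simp) = (y₀ :: M)[j']'(by
                simp only [List.length_cons]; omega) := by
              rw [List.getLast_eq_getElem]
              simp only [hlen2, Nat.add_sub_cancel]
              exact hGE j' (by omega) (by omega)
            rw [hlast_eq]
            exact hu₁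
      · -- extend the fan
        refine ih (M ++ [z]) ?_ ?_ ?_ ?_ ?_
        · have heq : y₀ :: (M ++ [z]) = (y₀ :: M) ++ [z] := rfl
          rw [heq]
          exact hnd.append (by simp) (by simpa [List.disjoint_right] using hzL)
        · intro h
          rcases List.mem_cons.1 h with h | h
          · exact hxyne h
          · rcases List.mem_append.1 h with h | h
            · exact hxm (List.mem_cons_of_mem _ h)
            · simp at h
              exact hzx h.symm
        · intro z' hz'
          rcases List.mem_append.1 hz' with h | h
          · exact hedg z' h
          · simp at h
            subst h
            exact hzE
        · intro i hi
          have hLL : y₀ :: (M ++ [z]) = (y₀ :: M) ++ [z] := rfl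
          simp only [hLL, List.length_append, List.length_cons, List.length_nil] at hi ⊢
          by_cases hi2 : i + 1 < (y₀ :: M).length
          · rw [List.getElem_append_left (by
              simp only [List.length_cons] at hi2 ⊢; omega),
              List.getElem_append_left hi2]
            exact hch i hi2
          · have hieq : i + 1 = (y₀ :: M).length := by
              simp only [List.length_cons] at hi2 ⊢
              omega
            have h1 : ((y₀ :: M) ++ [z])[i + 1]'(by
                simp only [List.length_append, List.length_cons, List.length_nil]
                omega) = z := by
              rw [List.getElem_append_right (by omega)]
              simp [hieq]
            have h2 : ((y₀ :: M) ++ [z])[i]'(by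
                simp only [List.length_append, List.length_cons, List.length_nil]
                omega) = w := by
              rw [List.getElem_append_left (by
                simp only [List.length_cons] at hieq ⊢; omega), hw,
                List.getLast_eq_getElem]
              congr 1
              simp only [List.length_cons] at hieq ⊢
              omega
            rw [h1, h2, hce₀]
            exact hdw
        · have hnd' : (y₀ :: (M ++ [z])).Nodup := by
            have heq : y₀ :: (M ++ [z]) = (y₀ :: M) ++ [z] := rfl
            rw [heq]
            exact hnd.append (by simp) (by simpa [List.disjoint_right] using hzL)
          have := hnd'.length_le_card
          simp only [List.length_cons, List.length_append, List.length_nil] at this ⊢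
          omega



/-- every subset of the edges has a proper colouring with maxDegree + 1 colours -/
lemma colorable (G : SimpleGraph V) [DecidableRel G.Adj] (E : Finset (Sym2 V)) :
    E ⊆ G.edgeFinset → ∃ C : Sym2 V → Fin (G.maxDegree + 1), Proper C E := by
  classical
  induction E using Finset.induction_on with
  | empty =>
    intro _
    exact ⟨fun _ => 0, fun e₁ h => by simp at h⟩
  | insert _ _ ha ih =>
    rename_i a s
    intro hsub
    obtain ⟨C, hP⟩ := ih ((subset_insert _ _).trans hsub)
    obtain ⟨x, y, rfl⟩ : ∃ x y, a = s(x, y) := by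
      induction a with
      | _ x y => exact ⟨x, y, rfl⟩
    have hP' : Proper C ((insert s(x, y) s).erase s(x, y)) := by
      rw [erase_insert ha]
      exact hP
    exact extend hsub (mem_insert_self _ _) C hP'

end VizingProof

/-- Vizing-type depth bound for CZ-gate scheduling: the edges of a finite simple graph `G`
with maximum degree `Δ` can be properly coloured with `Δ + 1` colours (equivalently,
partitioned into at most `Δ + 1` matchings): there is a colouring of edges such that any two
distinct edges sharing a vertex get different colours. -/
theorem vizing_edge_colouring {V : Type*} [Fintype V] [DecidableEq V]
    (G : SimpleGraph V) [DecidableRel G.Adj] :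
    ∃ C : Sym2 V → Fin (G.maxDegree + 1),
      ∀ e₁ ∈ G.edgeSet, ∀ e₂ ∈ G.edgeSet, e₁ ≠ e₂ →
        (∃ v : V, v ∈ e₁ ∧ v ∈ e₂) → C e₁ ≠ C e₂ := by
  obtain ⟨C, hP⟩ := VizingProof.colorable G G.edgeFinset (subset_refl _)
  refine ⟨C, fun e₁ he₁ e₂ he₂ hne hsh => ?_⟩
  exact hP e₁ (SimpleGraph.mem_edgeFinset.2 he₁) e₂ (SimpleGraph.mem_edgeFinset.2 he₂) hne hsh
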